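/- Let f, g : ℝ → ℝ be C¹ functions with f(x) + g(y) > 0 for all (x, y). On ℝ⁴ with coordinates (x, y, p₁, p₂), define H(x, y, p₁, p₂) := (p₁² + p₂²)/(f(x) + g(y)) and F := p₁² − f(x)·H. Then the canonical Poisson bracket {F, H} vanishes identically; that is, F is a first integral of the Hamiltonian system with Hamiltonian H. -/

import Mathlib

/-- Partial derivative in the `i`-th coordinate direction on ℝ⁴,
with coordinates `(x, y, p₁, p₂) = (z 0, z 1, z 2, z 3)`. -/
noncomputable def pd4 (i : Fin 4) (F : (Fin 4 → ℝ) → ℝ) (z : Fin 4 → ℝ) : ℝ :=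
  fderiv ℝ F z (Pi.single i 1)

/-- The canonical Poisson bracket on ℝ⁴ ≅ T*ℝ² with Darboux coordinates
`(x, y, p₁, p₂)`:
`{F, G} = (∂F/∂p₁)(∂G/∂x) + (∂F/∂p₂)(∂G/∂y) − (∂F/∂x)(∂G/∂p₁) − (∂F/∂y)(∂G/∂p₂)`. -/
noncomputable def poisson (F G : (Fin 4 → ℝ) → ℝ) (z : Fin 4 → ℝ) : ℝ :=
  pd4 2 F z * pd4 0 G z + pd4 3 F z * pd4 1 G z
    - pd4 0 F z * pd4 2 G z - pd4 1 F z * pd4 3 G z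

set_option maxHeartbeats 2000000 in
/-- For the geodesic Hamiltonian `H = (p₁² + p₂²)/(f(x) + g(y))` of a Liouville metric,
`F = p₁² − f(x)·H` is a first integral: `{F, H} = 0`. -/
theorem stmt4 (f g : ℝ → ℝ) (hf : ContDiff ℝ 1 f) (hg : ContDiff ℝ 1 g)
    (hpos : ∀ x y : ℝ, 0 < f x + g y)
    (H F : (Fin 4 → ℝ) → ℝ)
    (hH : ∀ z, H z = ((z 2) ^ 2 + (z 3) ^ 2) / (f (z 0) + g (z 1)))
    (hF : ∀ z, F z = (z 2) ^ 2 - f (z 0) * H z) :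
    ∀ z : Fin 4 → ℝ, poisson F H z = 0 := by
  have hfd : Differentiable ℝ f := hf.differentiable one_ne_zero
  have hgd : Differentiable ℝ g := hg.differentiable one_ne_zero
  have hHfun : H = fun z => ((z 2) ^ 2 + (z 3) ^ 2) / (f (z 0) + g (z 1)) := funext hH
  subst hHfun
  have hFfun : F = fun z =>
      (z 2) ^ 2 - f (z 0) * (((z 2) ^ 2 + (z 3) ^ 2) / (f (z 0) + g (z 1))) := funext hF
  subst hFfun
  intro z
  have hD : f (z 0) + g (z 1) ≠ 0 := (hpos _ _).ne'
  have hc : ∀ i : Fin 4, HasFDerivAt (fun w : Fin 4 → ℝ => w i)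
      ((ContinuousLinearMap.proj i : (Fin 4 → ℝ) →L[ℝ] ℝ)) z := fun i => (ContinuousLinearMap.proj (R := ℝ) (φ := fun _ : Fin 4 => ℝ) i).hasFDerivAt
  have hf0 : HasFDerivAt (fun w : Fin 4 → ℝ => f (w 0))
      ((deriv f (z 0)) • (ContinuousLinearMap.proj 0 : (Fin 4 → ℝ) →L[ℝ] ℝ)) z :=
    (hfd (z 0)).hasDerivAt.comp_hasFDerivAt z (hc 0)
  have hg1 : HasFDerivAt (fun w : Fin 4 → ℝ => g (w 1))
      ((deriv g (z 1)) • (ContinuousLinearMap.proj 1 : (Fin 4 → ℝ) →L[ℝ] ℝ)) z :=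
    (hgd (z 1)).hasDerivAt.comp_hasFDerivAt z (hc 1)
  have hsq2 : HasFDerivAt (fun w : Fin 4 → ℝ => (w 2) ^ 2)
      (z 2 • (ContinuousLinearMap.proj 2 : (Fin 4 → ℝ) →L[ℝ] ℝ)
        + z 2 • (ContinuousLinearMap.proj 2 : (Fin 4 → ℝ) →L[ℝ] ℝ)) z := by
    simpa [pow_two, Pi.mul_def] using (hc 2).mul (hc 2)
  have hsq3 : HasFDerivAt (fun w : Fin 4 → ℝ => (w 3) ^ 2)
      (z 3 • (ContinuousLinearMap.proj 3 : (Fin 4 → ℝ) →L[ℝ] ℝ)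
        + z 3 • (ContinuousLinearMap.proj 3 : (Fin 4 → ℝ) →L[ℝ] ℝ)) z := by
    simpa [pow_two, Pi.mul_def] using (hc 3).mul (hc 3)
  have hnum := hsq2.add hsq3
  have hden := hf0.add hg1
  have hinv := (hasFDerivAt_inv' (𝕜 := ℝ) hD).comp z hden
  have hHd : HasFDerivAt (fun w : Fin 4 → ℝ => ((w 2) ^ 2 + (w 3) ^ 2) / (f (w 0) + g (w 1)))
      ((((z 2) ^ 2 + (z 3) ^ 2) • ((-(ContinuousLinearMap.mulLeftRight ℝ ℝ
          (f (z 0) + g (z 1))⁻¹ (f (z 0) + g (z 1))⁻¹)).comp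
          (deriv f (z 0) • (ContinuousLinearMap.proj 0 : (Fin 4 → ℝ) →L[ℝ] ℝ)
            + deriv g (z 1) • (ContinuousLinearMap.proj 1 : (Fin 4 → ℝ) →L[ℝ] ℝ))))
        + (f (z 0) + g (z 1))⁻¹ • (z 2 • (ContinuousLinearMap.proj 2 : (Fin 4 → ℝ) →L[ℝ] ℝ)
            + z 2 • (ContinuousLinearMap.proj 2 : (Fin 4 → ℝ) →L[ℝ] ℝ)
            + (z 3 • (ContinuousLinearMap.proj 3 : (Fin 4 → ℝ) →L[ℝ] ℝ)
            + z 3 • (ContinuousLinearMap.proj 3 : (Fin 4 → ℝ) →L[ℝ] ℝ)))) z := by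
    simpa [div_eq_mul_inv, Pi.mul_def, Pi.add_def, Function.comp_def] using hnum.mul hinv
  have hFd := hsq2.sub (hf0.mul hHd)
  simp only [Pi.mul_def, Pi.sub_def] at hFd
  simp only [poisson, pd4, hHd.fderiv, hFd.fderiv]
  simp only [ContinuousLinearMap.add_apply, ContinuousLinearMap.sub_apply,
    ContinuousLinearMap.smul_apply, ContinuousLinearMap.proj_apply, smul_eq_mul,
    ContinuousLinearMap.comp_apply, neg_apply, ContinuousLinearMap.mulLeftRight_apply,
    Pi.single_eq_same, Pi.single_eq_of_ne (by decide : (0:Fin 4) ≠ 2),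
    Pi.single_eq_of_ne (by decide : (1:Fin 4) ≠ 2),
    Pi.single_eq_of_ne (by decide : (3:Fin 4) ≠ 2),
    Pi.single_eq_of_ne (by decide : (0:Fin 4) ≠ 3),
    Pi.single_eq_of_ne (by decide : (1:Fin 4) ≠ 3),
    Pi.single_eq_of_ne (by decide : (2:Fin 4) ≠ 3),
    Pi.single_eq_of_ne (by decide : (1:Fin 4) ≠ 0),
    Pi.single_eq_of_ne (by decide : (2:Fin 4) ≠ 0),
    Pi.single_eq_of_ne (by decide : (3:Fin 4) ≠ 0),
    Pi.single_eq_of_ne (by decide : (0:Fin 4) ≠ 1),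
    Pi.single_eq_of_ne (by decide : (2:Fin 4) ≠ 1),
    Pi.single_eq_of_ne (by decide : (3:Fin 4) ≠ 1)]
  field_simp
  ring
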